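/- Let T ∈ GL(n+1,ℝ) and a ∈ ℝ^{n+1} be nonzero with ‖T⁻¹(a)‖ < 1. Then T̄ₐ : Sⁿ → Sⁿ, T̄ₐ(x) = (a+T(x))/‖a+T(x)‖, is a homeomorphism. -/
import Mathlib


/-- The "affine" map `x ↦ (a + T(x))/‖a + T(x)‖` induced on the unit sphere. -/
noncomputable def affAct {m : ℕ} (A : Matrix (Fin m) (Fin m) ℝ)
    (a x : EuclideanSpace ℝ (Fin m)) : EuclideanSpace ℝ (Fin m) :=
  ‖a + Matrix.toEuclideanLin A x‖⁻¹ • (a + Matrix.toEuclideanLin A x)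

lemma toEuclideanLin_mul_apply {m : ℕ} (A B : Matrix (Fin m) (Fin m) ℝ)
    (v : EuclideanSpace ℝ (Fin m)) :
    Matrix.toEuclideanLin (A * B) v = Matrix.toEuclideanLin A (Matrix.toEuclideanLin B v) := by
  simp [Matrix.toEuclideanLin_apply, Matrix.mulVec_mulVec]

theorem stmt11 (n : ℕ) (T : GL (Fin (n + 1)) ℝ) (a : EuclideanSpace ℝ (Fin (n + 1)))
    (ha : a ≠ 0)
    (hlt : ‖Matrix.toEuclideanLin ((T⁻¹ : GL (Fin (n + 1)) ℝ) : Matrix (Fin (n + 1)) (Fin (n + 1)) ℝ) a‖ < 1) :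
    ∃ h : Metric.sphere (0 : EuclideanSpace ℝ (Fin (n + 1))) 1 ≃ₜ
          Metric.sphere (0 : EuclideanSpace ℝ (Fin (n + 1))) 1,
      ∀ x : Metric.sphere (0 : EuclideanSpace ℝ (Fin (n + 1))) 1,
        (h x : EuclideanSpace ℝ (Fin (n + 1))) =
          affAct (T : Matrix (Fin (n + 1)) (Fin (n + 1)) ℝ) a (x : EuclideanSpace ℝ (Fin (n + 1))) := by
  set M : Matrix (Fin (n + 1)) (Fin (n + 1)) ℝ := (T : Matrix (Fin (n + 1)) (Fin (n + 1)) ℝ)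
  set M' : Matrix (Fin (n + 1)) (Fin (n + 1)) ℝ := ((T⁻¹ : GL (Fin (n + 1)) ℝ) : Matrix (Fin (n + 1)) (Fin (n + 1)) ℝ)
  set L := Matrix.toEuclideanLin M
  set L' := Matrix.toEuclideanLin M'
  have hMM' : M * M' = 1 := T.mul_inv
  have hM'M : M' * M = 1 := T.inv_mul
  have hLL' : ∀ v, L (L' v) = v := by
    intro v
    rw [← toEuclideanLin_mul_apply, hMM']
    simp [Matrix.toEuclideanLin_apply]
  have hL'L : ∀ v, L' (L v) = v := by
    intro v
    rw [← toEuclideanLin_mul_apply, hM'M]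
    simp [Matrix.toEuclideanLin_apply]
  set b := L' a with hb_def
  have hb : ‖b‖ < 1 := hlt
  have hLb : L b = a := hLL' a
  -- nonvanishing
  have hne : ∀ x : EuclideanSpace ℝ (Fin (n + 1)), ‖x‖ = 1 → a + L x ≠ 0 := by
    intro x hx h0
    have : L x = -a := by linear_combination (norm := module) h0
    have hx' : x = -b := by
      have := hL'L x
      rw [this.symm, ‹L x = -a›, map_neg, ← hb_def]
    rw [hx', norm_neg] at hx
    rw [hx] at hb
    exact absurd hb (lt_irrefl 1)
  have hLcont : Continuous L := LinearMap.continuous_of_finiteDimensional L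
  -- the forward map
  have hmemf : ∀ x : Metric.sphere (0 : EuclideanSpace ℝ (Fin (n + 1))) 1,
      affAct M a (x : EuclideanSpace ℝ (Fin (n + 1))) ∈
        Metric.sphere (0 : EuclideanSpace ℝ (Fin (n + 1))) 1 := by
    intro x
    have hx : ‖(x : EuclideanSpace ℝ (Fin (n + 1)))‖ = 1 := by
      simpa using x.2
    have h0 : a + L x ≠ 0 := hne x hx
    simp only [mem_sphere_iff_norm, sub_zero, affAct, norm_smul, norm_inv, norm_norm]
    rw [inv_mul_cancel₀ (norm_ne_zero_iff.mpr h0)]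
  set f : Metric.sphere (0 : EuclideanSpace ℝ (Fin (n + 1))) 1 →
      Metric.sphere (0 : EuclideanSpace ℝ (Fin (n + 1))) 1 :=
    fun x => ⟨affAct M a x, hmemf x⟩ with hf_def
  have hfcont : Continuous f := by
    apply Continuous.subtype_mk
    have hc1 : Continuous fun x : Metric.sphere (0 : EuclideanSpace ℝ (Fin (n + 1))) 1 =>
        a + L (x : EuclideanSpace ℝ (Fin (n + 1))) :=
      continuous_const.add (hLcont.comp continuous_subtype_val)
    exact (hc1.norm.inv₀ fun x => norm_ne_zero_iff.mpr (hne x (by simpa using x.2))).smul hc1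
  -- injectivity
  have hinj : Function.Injective f := by
    intro x y hxy
    have hx : ‖(x : EuclideanSpace ℝ (Fin (n + 1)))‖ = 1 := by simpa using x.2
    have hy : ‖(y : EuclideanSpace ℝ (Fin (n + 1)))‖ = 1 := by simpa using y.2
    set u : EuclideanSpace ℝ (Fin (n + 1)) := a + L x with hu
    set v : EuclideanSpace ℝ (Fin (n + 1)) := a + L y with hv
    have hu0 : u ≠ 0 := hne x hx
    have hv0 : v ≠ 0 := hne y hy
    have hru : (0:ℝ) < ‖u‖ := norm_pos_iff.mpr hu0
    have hrv : (0:ℝ) < ‖v‖ := norm_pos_iff.mpr hv0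
    have heq : ‖u‖⁻¹ • u = ‖v‖⁻¹ • v := congrArg Subtype.val hxy
    set c : ℝ := ‖u‖ / ‖v‖ with hc
    have hcpos : 0 < c := div_pos hru hrv
    have huv : u = c • v := by
      have := congrArg (fun w : EuclideanSpace ℝ (Fin (n + 1)) => ‖u‖ • w) heq
      simp only [smul_smul] at this
      rw [mul_inv_cancel₀ (ne_of_gt hru), one_smul] at this
      rw [this, hc, div_eq_mul_inv, mul_comm]
    -- x - c • y = (c - 1) • b
    have key : (x : EuclideanSpace ℝ (Fin (n + 1))) - c • (y : EuclideanSpace ℝ (Fin (n + 1)))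
        = (c - 1) • b := by
      have h1 : L x - c • L y = (c - 1) • a := by
        have : a + L x = c • (a + L y) := huv
        rw [smul_add] at this
        linear_combination (norm := module) this
      have := congrArg L' h1
      rw [map_sub, map_smul, map_smul, hL'L, hL'L, ← hb_def] at this
      exact this
    have hnorm1 : |1 - c| ≤ ‖(x : EuclideanSpace ℝ (Fin (n + 1))) - c • (y : EuclideanSpace ℝ (Fin (n + 1)))‖ := by
      have := abs_norm_sub_norm_le (x : EuclideanSpace ℝ (Fin (n + 1)))
        (c • (y : EuclideanSpace ℝ (Fin (n + 1))))
      rwa [hx, norm_smul, hy, mul_one, Real.norm_eq_abs, abs_of_pos hcpos] at this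
    have hnorm2 : ‖(x : EuclideanSpace ℝ (Fin (n + 1))) - c • (y : EuclideanSpace ℝ (Fin (n + 1)))‖
        = |c - 1| * ‖b‖ := by
      rw [key, norm_smul, Real.norm_eq_abs]
    have hc1 : c = 1 := by
      by_contra hc1
      have h1c : 0 < |c - 1| := abs_pos.mpr (sub_ne_zero.mpr hc1)
      have : |c - 1| ≤ |c - 1| * ‖b‖ := by
        calc |c - 1| = |1 - c| := (abs_sub_comm 1 c).symm
        _ ≤ _ := hnorm1
        _ = |c - 1| * ‖b‖ := hnorm2
      nlinarith [norm_nonneg b]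
    have : (x : EuclideanSpace ℝ (Fin (n + 1))) - (y : EuclideanSpace ℝ (Fin (n + 1))) = 0 := by
      have := key
      rw [hc1] at this
      simpa using this
    exact Subtype.ext (sub_eq_zero.mp this)
  -- surjectivity
  have hsurj : Function.Surjective f := by
    intro y
    have hy : ‖(y : EuclideanSpace ℝ (Fin (n + 1)))‖ = 1 := by simpa using y.2
    set w : EuclideanSpace ℝ (Fin (n + 1)) := L' y with hw
    have hLw : L w = y := hLL' y
    have hw0 : w ≠ 0 := by
      intro h
      rw [h, map_zero] at hLw
      rw [← hLw] at hy
      simp at hy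
    have hwn : (0:ℝ) < ‖w‖ := norm_pos_iff.mpr hw0
    set g : ℝ → ℝ := fun t => ‖t • w - b‖ with hg
    have hgcont : Continuous g := by
      have : Continuous fun t : ℝ => t • w - b :=
        (continuous_id.smul continuous_const).sub continuous_const
      exact this.norm
    set t₀ : ℝ := (1 + ‖b‖) / ‖w‖ with ht₀
    have ht₀pos : 0 < t₀ := div_pos (by positivity) hwn
    have hg0 : g 0 = ‖b‖ := by simp [hg]
    have hgt₀ : 1 ≤ g t₀ := by
      have h1 : ‖t₀ • w‖ - ‖b‖ ≤ ‖t₀ • w - b‖ := by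
        have := abs_norm_sub_norm_le (t₀ • w) b
        have := abs_le.mp this
        linarith [this.2]
      have h2 : ‖t₀ • w‖ = 1 + ‖b‖ := by
        rw [norm_smul, Real.norm_eq_abs, abs_of_pos ht₀pos, ht₀,
          div_mul_cancel₀ _ (ne_of_gt hwn)]
      rw [hg]
      dsimp only
      linarith
    have hmem : (1:ℝ) ∈ Set.Icc (g 0) (g t₀) := by
      constructor
      · rw [hg0]; linarith
      · exact hgt₀
    obtain ⟨t, ht_mem, ht⟩ := intermediate_value_Icc (le_of_lt ht₀pos) hgcont.continuousOn hmem
    have htpos : 0 < t := by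
      rcases lt_or_eq_of_le ht_mem.1 with h | h
      · exact h
      · exfalso; rw [← h] at ht; rw [hg0] at ht; linarith
    -- candidate preimage
    set x : EuclideanSpace ℝ (Fin (n + 1)) := t • w - b with hxdef
    have hxnorm : ‖x‖ = 1 := ht
    have hLx : L x = t • (y : EuclideanSpace ℝ (Fin (n + 1))) - a := by
      rw [hxdef, map_sub, map_smul, hLw, hLb]
    have haLx : a + L x = t • (y : EuclideanSpace ℝ (Fin (n + 1))) := by
      rw [hLx]; abel
    refine ⟨⟨x, by simpa [mem_sphere_iff_norm] using hxnorm⟩, ?_⟩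
    apply Subtype.ext
    show affAct M a x = (y : EuclideanSpace ℝ (Fin (n + 1)))
    rw [affAct]
    show ‖a + L x‖⁻¹ • (a + L x) = _
    rw [haLx, norm_smul, Real.norm_eq_abs, abs_of_pos htpos, hy, mul_one, smul_smul,
      inv_mul_cancel₀ (ne_of_gt htpos), one_smul]
  -- assemble
  let e := Equiv.ofBijective f ⟨hinj, hsurj⟩
  refine ⟨hfcont.homeoOfEquivCompactToT2 (f := e), fun x => rfl⟩
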